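/- In the two-sided sequential matching model, assume consumers follow MNL models with scores v_ij > 0, each demand function Q_j : 2^N → [0,1] is monotone with Q_j(∅) = 0, and cardinality budgets K_i ∈ ℤ_+ are given. For any x̂ ∈ {0,1}^{N×V} with Σ_{j∈V} x̂_ij ≤ K_i for all i ∈ N, the point defined by ŵ_i = 1/(1 + Σ_{ℓ∈V} v_iℓ x̂_iℓ), ŷ_ij = x̂_ij·ŵ_i, and ẑ_j = min{1, Σ_{i∈N} v_ij ŷ_ij} is feasible for the cardinality-constrained LP relaxation (11); in particular it satisfies Σ_{j∈V} ŷ_ij ≤ K_i ŵ_i. Consequently, OPT = max over assortment families S with |S_i| ≤ K_i of E[M_S] satisfies OPT ≤ OPT_LPcard. -/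
import Mathlib

private lemma weier {ι : Type*} (s : Finset ι) (p : ι → ℝ)
    (h0 : ∀ i, 0 ≤ p i) (h1 : ∀ i, p i ≤ 1) :
    1 - ∑ i ∈ s, p i ≤ ∏ i ∈ s, (1 - p i) := by
  induction s using Finset.cons_induction with
  | empty => simp
  | cons a s ha ih =>
    rw [Finset.sum_cons, Finset.prod_cons]
    have h1a : 0 ≤ 1 - p a := by linarith [h1 a]
    have : (1 - p a) * (1 - ∑ i ∈ s, p i) ≤ (1 - p a) * ∏ i ∈ s, (1 - p i) :=
      mul_le_mul_of_nonneg_left ih h1a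
    have hs : (0:ℝ) ≤ ∑ i ∈ s, p i := Finset.sum_nonneg fun i _ => h0 i
    nlinarith [h0 a]

private lemma keylem {ι : Type*} [Fintype ι] [DecidableEq ι] (p : ι → ℝ)
    (h0 : ∀ i, 0 ≤ p i) (h1 : ∀ i, p i ≤ 1)
    (Q : Finset ι → ℝ) (hQ0 : Q ∅ = 0) (hQr : ∀ A, Q A ∈ Set.Icc (0:ℝ) 1) :
    ∑ A : Finset ι, Q A * ((∏ i ∈ A, p i) * ∏ i ∈ Aᶜ, (1 - p i)) ≤
      min 1 (∑ i, p i) := by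
  set μ : Finset ι → ℝ := fun A => (∏ i ∈ A, p i) * ∏ i ∈ Aᶜ, (1 - p i) with hμ
  have hμ0 : ∀ A, 0 ≤ μ A := fun A =>
    mul_nonneg (Finset.prod_nonneg fun i _ => h0 i)
      (Finset.prod_nonneg fun i _ => by linarith [h1 i])
  have total : ∑ A : Finset ι, μ A = 1 := by
    have := Finset.prod_add p (fun i => 1 - p i) (Finset.univ : Finset ι)
    simp only [add_sub_cancel, Finset.prod_const_one] at this
    rw [← Finset.powerset_univ] at *
    calc ∑ A ∈ Finset.univ.powerset, μ A
        = ∑ A ∈ Finset.univ.powerset, (∏ i ∈ A, p i) * ∏ i ∈ Finset.univ \ A, (1 - p i) := by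
          refine Finset.sum_congr rfl fun A _ => ?_
          show (∏ i ∈ A, p i) * ∏ i ∈ Aᶜ, (1 - p i) = _
          rw [Finset.compl_eq_univ_sdiff]
      _ = 1 := this.symm
  have step : ∀ A : Finset ι, Q A * μ A ≤ (if A = ∅ then 0 else μ A) := by
    intro A
    by_cases hA : A = ∅
    · simp [hA, hQ0]
    · simp only [hA, if_false]
      calc Q A * μ A ≤ 1 * μ A := mul_le_mul_of_nonneg_right (hQr A).2 (hμ0 A)
        _ = μ A := one_mul _
  have hsum : ∑ A : Finset ι, (if A = ∅ then 0 else μ A) = 1 - μ ∅ := by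
    have : ∑ A : Finset ι, (if A = ∅ then (0:ℝ) else μ A)
        = ∑ A : Finset ι, (μ A - if A = ∅ then μ A else 0) := by
      refine Finset.sum_congr rfl fun A _ => ?_
      by_cases hA : A = ∅ <;> simp [hA]
    rw [this, Finset.sum_sub_distrib, total, Finset.sum_ite_eq' Finset.univ ∅ μ]
    simp
  have hμempty : μ ∅ = ∏ i, (1 - p i) := by simp [hμ]
  calc ∑ A : Finset ι, Q A * μ A ≤ ∑ A : Finset ι, (if A = ∅ then 0 else μ A) :=
        Finset.sum_le_sum fun A _ => step A
    _ = 1 - μ ∅ := hsum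
    _ ≤ min 1 (∑ i, p i) := by
        rw [hμempty]
        refine le_min ?_ ?_
        · have : 0 ≤ ∏ i, (1 - p i) :=
            Finset.prod_nonneg fun i _ => by linarith [h1 i]
          linarith
        · have := weier Finset.univ p h0 h1
          linarith


/-- Expected revenue of the matching when the assortment family is `S`:
`E[M_S] = ∑_j r_j · E[Q_j(A_j^S)]`, where consumer `i` independently selects supplier `j`
with probability `pc i j (S i)`. -/
def expRev {ι κ : Type*} [Fintype ι] [Fintype κ] [DecidableEq ι]
    (pc : ι → κ → Finset κ → ℝ) (Q : κ → Finset ι → ℝ) (r : κ → ℝ)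
    (S : ι → Finset κ) : ℝ :=
  ∑ j : κ, r j * ∑ A : Finset ι,
    Q j A * ((∏ i ∈ A, pc i j (S i)) * ∏ i ∈ Aᶜ, (1 - pc i j (S i)))

/-- Multinomial logit choice probabilities with scores `v`. -/
noncomputable def pcMNL {ι κ : Type*} [DecidableEq κ] (v : ι → κ → ℝ) (i : ι) (j : κ)
    (S : Finset κ) : ℝ :=
  if j ∈ S then v i j / (1 + ∑ ℓ ∈ S, v i ℓ) else 0

/-- **Lemma 3.6.** For MNL consumers under cardinality budgets `K_i`,
every assortment family with `|S_i| ≤ K_i` induces a feasible point of the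
cardinality-constrained LP relaxation (11); in particular the induced point satisfies
`∑_j ŷ_{ij} ≤ K_i ŵ_i`. Consequently, `OPT ≤ OPT_LPcard`. -/
theorem lp_relaxation_card_feasible_and_upper_bound
    {ι κ : Type*} [Fintype ι] [Fintype κ] [DecidableEq ι] [DecidableEq κ]
    (v : ι → κ → ℝ) (hv : ∀ i j, 0 < v i j)
    (Q : κ → Finset ι → ℝ)
    (hQrange : ∀ j A, Q j A ∈ Set.Icc (0 : ℝ) 1)
    (hQ0 : ∀ j, Q j ∅ = 0)
    (hQmono : ∀ j (A B : Finset ι), A ⊆ B → Q j A ≤ Q j B)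
    (r : κ → ℝ) (hr : ∀ j, 0 ≤ r j)
    (K : ι → ℕ)
    (S : ι → Finset κ) (hcard : ∀ i, (S i).card ≤ K i) :
    -- feasibility of the induced point `(ŷ, ŵ, ẑ)` for LP (11)
    (∀ j : κ, min 1 (∑ i : ι, v i j *
        ((if j ∈ S i then (1 : ℝ) else 0) * (1 / (1 + ∑ ℓ ∈ S i, v i ℓ)))) ≤ 1) ∧
    (∀ j : κ, min 1 (∑ i : ι, v i j *
        ((if j ∈ S i then (1 : ℝ) else 0) * (1 / (1 + ∑ ℓ ∈ S i, v i ℓ)))) ≤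
      ∑ i : ι, v i j *
        ((if j ∈ S i then (1 : ℝ) else 0) * (1 / (1 + ∑ ℓ ∈ S i, v i ℓ)))) ∧
    (∀ i : ι, (1 / (1 + ∑ ℓ ∈ S i, v i ℓ)) + ∑ j : κ, v i j *
        ((if j ∈ S i then (1 : ℝ) else 0) * (1 / (1 + ∑ ℓ ∈ S i, v i ℓ))) = 1) ∧
    (∀ i : ι, ∑ j : κ, (if j ∈ S i then (1 : ℝ) else 0) * (1 / (1 + ∑ ℓ ∈ S i, v i ℓ)) ≤
      (K i : ℝ) * (1 / (1 + ∑ ℓ ∈ S i, v i ℓ))) ∧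
    (∀ (i : ι) (j : κ),
      0 ≤ (if j ∈ S i then (1 : ℝ) else 0) * (1 / (1 + ∑ ℓ ∈ S i, v i ℓ)) ∧
      (if j ∈ S i then (1 : ℝ) else 0) * (1 / (1 + ∑ ℓ ∈ S i, v i ℓ)) ≤
        1 / (1 + ∑ ℓ ∈ S i, v i ℓ)) ∧
    -- consequently, `OPT ≤ OPT_LPcard`
    (∀ S' : ι → Finset κ, (∀ i, (S' i).card ≤ K i) →
      ∃ (y : ι → κ → ℝ) (w : ι → ℝ) (z : κ → ℝ),
        (∀ j, z j ≤ 1) ∧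
        (∀ j, z j ≤ ∑ i : ι, v i j * y i j) ∧
        (∀ i, w i + ∑ j : κ, v i j * y i j = 1) ∧
        (∀ i, ∑ j : κ, y i j ≤ (K i : ℝ) * w i) ∧
        (∀ i j, 0 ≤ y i j ∧ y i j ≤ w i) ∧
        expRev (pcMNL v) Q r S' ≤ ∑ j : κ, r j * z j) := by
  have main : ∀ T : ι → Finset κ, (∀ i, (T i).card ≤ K i) →
      (∀ i : ι, 0 < 1 + ∑ ℓ ∈ T i, v i ℓ) ∧
      (∀ i : ι, (1 / (1 + ∑ ℓ ∈ T i, v i ℓ)) + ∑ j : κ, v i j *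
          ((if j ∈ T i then (1 : ℝ) else 0) * (1 / (1 + ∑ ℓ ∈ T i, v i ℓ))) = 1) ∧
      (∀ i : ι, ∑ j : κ, (if j ∈ T i then (1 : ℝ) else 0) * (1 / (1 + ∑ ℓ ∈ T i, v i ℓ)) ≤
        (K i : ℝ) * (1 / (1 + ∑ ℓ ∈ T i, v i ℓ))) ∧
      (∀ (i : ι) (j : κ),
        0 ≤ (if j ∈ T i then (1 : ℝ) else 0) * (1 / (1 + ∑ ℓ ∈ T i, v i ℓ)) ∧
        (if j ∈ T i then (1 : ℝ) else 0) * (1 / (1 + ∑ ℓ ∈ T i, v i ℓ)) ≤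
          1 / (1 + ∑ ℓ ∈ T i, v i ℓ)) := by
    intro T hT
    have hD : ∀ i : ι, 0 < 1 + ∑ ℓ ∈ T i, v i ℓ := fun i => by
      have : (0:ℝ) ≤ ∑ ℓ ∈ T i, v i ℓ :=
        Finset.sum_nonneg fun ℓ _ => (hv i ℓ).le
      linarith
    have hw : ∀ i : ι, 0 ≤ 1 / (1 + ∑ ℓ ∈ T i, v i ℓ) := fun i =>
      le_of_lt (one_div_pos.mpr (hD i))
    refine ⟨hD, ?_, ?_, ?_⟩
    · intro i
      set w := 1 / (1 + ∑ ℓ ∈ T i, v i ℓ) with hwdef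
      have h1 : ∀ j : κ, v i j * ((if j ∈ T i then (1:ℝ) else 0) * w)
          = if j ∈ T i then v i j * w else 0 := by
        intro j; by_cases h : j ∈ T i <;> simp [h]
      rw [Finset.sum_congr rfl fun j _ => h1 j, Finset.sum_ite_mem,
        Finset.univ_inter, ← Finset.sum_mul, hwdef]
      have := (hD i).ne'
      field_simp
    · intro i
      have h1 : ∀ j : κ, (if j ∈ T i then (1:ℝ) else 0) * (1 / (1 + ∑ ℓ ∈ T i, v i ℓ))
          = if j ∈ T i then (1 / (1 + ∑ ℓ ∈ T i, v i ℓ)) else 0 := by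
        intro j; by_cases h : j ∈ T i <;> simp [h]
      rw [Finset.sum_congr rfl fun j _ => h1 j, Finset.sum_ite_mem,
        Finset.univ_inter, Finset.sum_const, nsmul_eq_mul]
      exact mul_le_mul_of_nonneg_right (by exact_mod_cast hT i) (hw i)
    · intro i j
      by_cases h : j ∈ T i <;> simp [h, hw i, (hD i).le]
  obtain ⟨hD, hP3, hP4, hP5⟩ := main S hcard
  refine ⟨fun j => min_le_left _ _, fun j => min_le_right _ _, hP3, hP4, hP5, ?_⟩
  intro S' hc'
  obtain ⟨hD', hP3', hP4', hP5'⟩ := main S' hc'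
  refine ⟨fun i j => (if j ∈ S' i then (1:ℝ) else 0) * (1 / (1 + ∑ ℓ ∈ S' i, v i ℓ)),
    fun i => 1 / (1 + ∑ ℓ ∈ S' i, v i ℓ),
    fun j => min 1 (∑ i : ι, v i j *
      ((if j ∈ S' i then (1:ℝ) else 0) * (1 / (1 + ∑ ℓ ∈ S' i, v i ℓ)))),
    fun j => min_le_left _ _, fun j => min_le_right _ _, hP3', hP4', hP5', ?_⟩
  unfold expRev
  refine Finset.sum_le_sum fun j _ => mul_le_mul_of_nonneg_left ?_ (hr j)
  have hpc : ∀ i : ι, pcMNL v i j (S' i) = v i j *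
      ((if j ∈ S' i then (1:ℝ) else 0) * (1 / (1 + ∑ ℓ ∈ S' i, v i ℓ))) := by
    intro i; by_cases h : j ∈ S' i <;> simp [pcMNL, h, mul_one_div, div_eq_mul_inv]
  have h0 : ∀ i : ι, 0 ≤ pcMNL v i j (S' i) := by
    intro i
    rw [hpc i]
    exact mul_nonneg (hv i j).le (hP5' i j).1
  have h1 : ∀ i : ι, pcMNL v i j (S' i) ≤ 1 := by
    intro i
    unfold pcMNL
    by_cases h : j ∈ S' i
    · simp only [h, if_true]
      rw [div_le_one (hD' i)]
      have : v i j ≤ ∑ ℓ ∈ S' i, v i ℓ :=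
        Finset.single_le_sum (fun ℓ _ => (hv i ℓ).le) h
      linarith
    · simp [h]
  have := keylem (fun i => pcMNL v i j (S' i)) h0 h1 (Q j) (hQ0 j) (hQrange j)
  calc ∑ A : Finset ι, Q j A *
        ((∏ i ∈ A, pcMNL v i j (S' i)) * ∏ i ∈ Aᶜ, (1 - pcMNL v i j (S' i)))
      ≤ min 1 (∑ i, pcMNL v i j (S' i)) := this
    _ = min 1 (∑ i : ι, v i j *
        ((if j ∈ S' i then (1:ℝ) else 0) * (1 / (1 + ∑ ℓ ∈ S' i, v i ℓ)))) := by
        rw [Finset.sum_congr rfl fun i _ => hpc i]
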